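/- Let F_{n,2} be the n×n matrix with F(i,j) = -1 if i = j+1, F(i,j) = 1 if j - i ≥ 1, else 0. For k ≤ n-2, the number of compositions of n with exactly k parts equal to 1 and all other parts ≥ 2 equals the sum of all principal minors of order n-k of F_{n,2}. -/

import Mathlib

/-- The `n × n` Hessenberg matrix `F_{n,2}` with entries `-1` when `i = j + 1`,
`1` when `j - i ≥ 1`, and `0` otherwise. -/
def F2 (n : ℕ) : Matrix (Fin n) (Fin n) ℤ := fun i j =>
  if (i : ℕ) = (j : ℕ) + 1 then -1
  else if (i : ℕ) + 1 ≤ (j : ℕ) then 1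
  else 0

open Polynomial Matrix Finset

variable {n : ℕ}

lemma det_piecewise_single {R : Type*} [CommRing R] (A : Matrix (Fin n) (Fin n) R)
    (s : Finset (Fin n)) :
    (Matrix.of (s.piecewise A (fun i => Pi.single i 1))).det
      = (A.submatrix (Subtype.val : {x // x ∈ s} → Fin n) Subtype.val).det := by
  classical
  let e : {x // x ∈ s} ⊕ {x // x ∉ s} ≃ Fin n := Equiv.sumCompl (· ∈ s)
  rw [← Matrix.det_submatrix_equiv_self e]
  have : (Matrix.of (s.piecewise A (fun i => Pi.single i 1))).submatrix e e
      = Matrix.fromBlocks (A.submatrix Subtype.val Subtype.val)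
          (A.submatrix Subtype.val Subtype.val) 0 1 := by
    ext (i|i) (j|j)
    · simp [e, Matrix.submatrix, Finset.piecewise_eq_of_mem, i.2]
      exact congrFun (Finset.piecewise_eq_of_mem _ _ _ i.2) _
    · simp [e, Matrix.submatrix, Finset.piecewise_eq_of_mem, i.2]
      exact congrFun (Finset.piecewise_eq_of_mem _ _ _ i.2) _
    · simp only [e, Matrix.submatrix_apply, Equiv.sumCompl_apply_inr, Equiv.sumCompl_apply_inl,
        Matrix.of_apply, Finset.piecewise_eq_of_notMem _ _ _ i.2, Matrix.fromBlocks_apply₂₁,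
        Matrix.zero_apply, Pi.single_apply]
      erw [Finset.piecewise_eq_of_notMem _ _ _ i.2, Pi.single_apply]
      rw [if_neg]
      intro h
      exact i.2 (by rw [show (i : Fin n) = j from h.symm]; exact j.2)
    · simp only [e, Matrix.submatrix_apply, Equiv.sumCompl_apply_inr, Matrix.of_apply,
        Finset.piecewise_eq_of_notMem _ _ _ i.2, Matrix.fromBlocks_apply₂₂,
        Matrix.one_apply, Pi.single_apply, Subtype.ext_iff, eq_comm]
      erw [Finset.piecewise_eq_of_notMem _ _ _ i.2, Pi.single_apply]
      exact if_congr eq_comm rfl rfl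
  rw [this, Matrix.det_fromBlocks_zero₂₁]
  simp

lemma det_X_smul_one_add_map (A : Matrix (Fin n) (Fin n) ℤ) :
    ((X : ℤ[X]) • (1 : Matrix (Fin n) (Fin n) ℤ[X]) + A.map C).det
      = ∑ s : Finset (Fin n), X ^ (n - s.card)
          * C ((A.submatrix (Subtype.val : {x // x ∈ s} → Fin n) Subtype.val).det) := by
  classical
  have key : ((X : ℤ[X]) • (1 : Matrix (Fin n) (Fin n) ℤ[X]) + A.map C).det
      = (Matrix.detRowAlternating : ((Fin n → ℤ[X]) [⋀^Fin n]→ₗ[ℤ[X]] ℤ[X])).toMultilinearMap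
          ((A.map C : Fin n → Fin n → ℤ[X]) + ((X : ℤ[X]) • (1 : Matrix (Fin n) (Fin n) ℤ[X]) : Fin n → Fin n → ℤ[X])) := by
    rw [add_comm]
    rfl
  rw [key]
  erw [MultilinearMap.map_add_univ]
  refine Finset.sum_congr rfl fun s _ => ?_
  set N : Fin n → Fin n → ℤ[X] := s.piecewise (A.map C) (fun i => Pi.single i 1) with hN
  have hpiece : s.piecewise (A.map C : Fin n → Fin n → ℤ[X])
        ((X : ℤ[X]) • (1 : Matrix (Fin n) (Fin n) ℤ[X]) : Fin n → Fin n → ℤ[X])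
      = sᶜ.piecewise (fun i => (X : ℤ[X]) • N i) N := by
    funext i
    by_cases hi : i ∈ s
    · erw [Finset.piecewise_eq_of_mem _ _ _ hi,
        Finset.piecewise_eq_of_notMem _ _ _ (by simpa using hi), hN,
        Finset.piecewise_eq_of_mem _ _ _ hi]
    · erw [Finset.piecewise_eq_of_notMem _ _ _ hi,
        Finset.piecewise_eq_of_mem _ _ _ (by simpa using hi), hN,
        Finset.piecewise_eq_of_notMem _ _ _ hi]
      funext j
      simp [Matrix.one_apply, Pi.single_apply, eq_comm]
  rw [hpiece, MultilinearMap.map_piecewise_smul]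
  have hcard : sᶜ.card = n - s.card := by
    simp [Finset.card_compl]
  have hdet : (Matrix.detRowAlternating :
        ((Fin n → ℤ[X]) [⋀^Fin n]→ₗ[ℤ[X]] ℤ[X])).toMultilinearMap N
      = C ((A.submatrix (Subtype.val : {x // x ∈ s} → Fin n) Subtype.val).det) := by
    have : (Matrix.detRowAlternating :
        ((Fin n → ℤ[X]) [⋀^Fin n]→ₗ[ℤ[X]] ℤ[X])).toMultilinearMap N
        = (Matrix.of (s.piecewise ((A.map C)) (fun i => Pi.single i 1))).det := rfl
    rw [this, det_piecewise_single (A.map C) s]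
    rw [Matrix.submatrix_map]
    exact (RingHom.map_det C _).symm
  rw [hdet, Finset.prod_const, hcard, smul_eq_mul]


noncomputable def Mm (n : ℕ) : Matrix (Fin n) (Fin n) ℤ[X] :=
  (X : ℤ[X]) • (1 : Matrix (Fin n) (Fin n) ℤ[X]) + (F2 n).map C

lemma Mm_apply (n : ℕ) (i j : Fin n) :
    Mm n i j = if (i : ℕ) = (j : ℕ) then X
      else if (i : ℕ) = (j : ℕ) + 1 then -1
      else if (i : ℕ) + 1 ≤ (j : ℕ) then 1 else 0 := by
  simp only [Mm, Matrix.add_apply, Matrix.smul_apply, Matrix.one_apply, Matrix.map_apply, F2,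
    Fin.val_eq_val, smul_eq_mul]
  rcases eq_or_ne i j with rfl | hij
  · simp
  · simp only [if_neg hij]
    split_ifs <;> simp

noncomputable def Gm (n : ℕ) : Matrix (Fin (n+1)) (Fin (n+1)) ℤ[X] :=
  (Mm (n+1)).updateRow 0 (fun _ => 1)

lemma Gm_apply (n : ℕ) (i j : Fin (n+1)) :
    Gm n i j = if (i : ℕ) = 0 then 1 else Mm (n+1) i j := by
  rcases eq_or_ne i 0 with rfl | hi
  · simp [Gm]
  · have : (i : ℕ) ≠ 0 := fun h => hi (Fin.ext h)
    simp [Gm, Matrix.updateRow_ne hi, this]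

lemma succAbove_one_val {n : ℕ} (i : Fin (n+1)) :
    (((1 : Fin (n+2)).succAbove i : Fin (n+2)) : ℕ) = if (i : ℕ) = 0 then 0 else (i : ℕ) + 1 := by
  rcases eq_or_ne i 0 with rfl | hi
  · simp [Fin.succAbove]
  · have h0 : 0 < (i : ℕ) := Nat.pos_of_ne_zero (fun h => hi (Fin.ext h))
    rw [Fin.succAbove, if_neg, Fin.val_succ, if_neg (by omega)]
    simp only [not_lt, Fin.le_def, Fin.val_one, Fin.coe_castSucc]
    omega

lemma Mm_sub_succ (n : ℕ) :
    (Mm (n+1)).submatrix (Fin.succ) (Fin.succ) = Mm n := by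
  refine Matrix.ext fun i j => ?_
  simp only [Matrix.submatrix_apply, Mm_apply, Fin.val_succ]
  split_ifs <;> first | rfl | omega | simp_all

lemma Mm_sub_one (n : ℕ) :
    (Mm (n+2)).submatrix ((1 : Fin (n+2)).succAbove) (Fin.succ) = Gm n := by
  refine Matrix.ext fun i j => ?_
  rcases eq_or_ne (i : ℕ) 0 with h0 | h0 <;>
    · simp only [Matrix.submatrix_apply, Gm_apply, Mm_apply, succAbove_one_val, Fin.val_succ, h0]
      split_ifs <;> first | rfl | omega | simp_all

lemma Gm_sub_succ (n : ℕ) :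
    (Gm (n+1)).submatrix (Fin.succ) (Fin.succ) = Mm (n+1) := by
  refine Matrix.ext fun i j => ?_
  simp only [Matrix.submatrix_apply, Gm_apply, Fin.val_succ]
  rw [if_neg (by omega)]
  simp only [Mm_apply, Fin.val_succ]
  split_ifs <;> first | rfl | omega | simp_all

lemma Gm_sub_one (n : ℕ) :
    (Gm (n+1)).submatrix ((1 : Fin (n+2)).succAbove) (Fin.succ) = Gm n := by
  refine Matrix.ext fun i j => ?_
  rcases eq_or_ne (i : ℕ) 0 with h0 | h0 <;>
    · simp only [Matrix.submatrix_apply, Gm_apply, Mm_apply, succAbove_one_val, Fin.val_succ, h0]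
      split_ifs <;> first | rfl | omega | simp_all

lemma det_Mm_zero : (Mm 0).det = 1 := Matrix.det_fin_zero

lemma det_Mm_one : (Mm 1).det = X := by
  rw [Matrix.det_fin_one, Mm_apply]
  simp

lemma det_Gm_zero : (Gm 0).det = 1 := by
  rw [Matrix.det_fin_one, Gm_apply]
  simp

lemma det_Mm_succ_succ (n : ℕ) :
    (Mm (n+2)).det = X * (Mm (n+1)).det + (Gm n).det := by
  rw [Matrix.det_succ_column_zero, Fin.sum_univ_succ, Fin.sum_univ_succ]
  have h00 : Mm (n+2) 0 0 = X := by rw [Mm_apply]; simp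
  have h10 : Mm (n+2) (Fin.succ 0) 0 = -1 := by
    rw [Mm_apply]
    simp
  have htail : ∀ i : Fin n, Mm (n+2) (Fin.succ (Fin.succ i)) 0 = 0 := by
    intro i
    rw [Mm_apply]
    simp only [Fin.val_succ, Fin.val_zero]
    split_ifs <;> first | rfl | omega | simp_all
  rw [h00, h10]
  rw [Finset.sum_eq_zero (fun i _ => by rw [htail i]; ring)]
  rw [Fin.succAbove_zero, Mm_sub_succ]
  have h1 : Fin.succ (0 : Fin (n+1)) = (1 : Fin (n+2)) := Fin.succ_zero_eq_one
  rw [h1, Mm_sub_one]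
  simp

lemma det_Gm_succ (n : ℕ) :
    (Gm (n+1)).det = (Mm (n+1)).det + (Gm n).det := by
  rw [Matrix.det_succ_column_zero, Fin.sum_univ_succ, Fin.sum_univ_succ]
  have h00 : Gm (n+1) 0 0 = 1 := by rw [Gm_apply]; simp
  have h10 : Gm (n+1) (Fin.succ 0) 0 = -1 := by
    rw [Gm_apply, if_neg (by simp), Mm_apply]
    simp
  have htail : ∀ i : Fin n, Gm (n+1) (Fin.succ (Fin.succ i)) 0 = 0 := by
    intro i
    rw [Gm_apply, if_neg (by simp), Mm_apply]
    simp only [Fin.val_succ, Fin.val_zero]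
    split_ifs <;> first | rfl | omega | simp_all
  rw [h00, h10]
  rw [Finset.sum_eq_zero (fun i _ => by rw [htail i]; ring)]
  rw [Fin.succAbove_zero, Gm_sub_succ]
  have h1 : Fin.succ (0 : Fin (n+1)) = (1 : Fin (n+2)) := Fin.succ_zero_eq_one
  rw [h1, Gm_sub_one]
  simp

lemma det_Gm_sum (n : ℕ) : (Gm n).det = ∑ j ∈ Finset.range (n+1), (Mm j).det := by
  induction n with
  | zero => simpa [det_Mm_zero] using det_Gm_zero
  | succ n ih =>
    rw [det_Gm_succ, ih, Finset.sum_range_succ (fun j => (Mm j).det) (n+1)]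
    ring

lemma det_Mm_rec (n : ℕ) :
    (Mm (n+1)).det = X * (Mm n).det + ∑ j ∈ Finset.range n, (Mm j).det := by
  match n with
  | 0 =>
    rw [det_Mm_one, det_Mm_zero]
    simp
  | n+1 => rw [det_Mm_succ_succ, det_Gm_sum]


def CF : ℕ → ℕ → Finset (List ℕ)
  | 0, 0 => {[]}
  | 0, _+1 => ∅
  | n+1, k =>
    ((Finset.range n).attach.biUnion fun j =>
        (CF j.1 k).image (fun l => (n + 1 - j.1) :: l)) ∪
      (match k with
       | 0 => ∅
       | k+1 => (CF n k).image (fun l => 1 :: l))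
termination_by n k => n
decreasing_by
  · exact Nat.lt_succ_of_lt (Finset.mem_range.mp j.2)
  · exact Nat.lt_succ_self n

lemma mem_CF : ∀ n k l, l ∈ CF n k ↔
    (l.sum = n ∧ l.count 1 = k ∧ ∀ x ∈ l, x = 1 ∨ 2 ≤ x) := by
  intro n
  induction n using Nat.strong_induction_on with
  | _ n IH =>
    match n with
    | 0 =>
      intro k l
      match k with
      | 0 =>
        simp only [CF, Finset.mem_singleton]
        constructor
        · rintro rfl; simp
        · rintro ⟨h1, h2, h3⟩
          cases l with
          | nil => rfl
          | cons a t =>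
            exfalso
            rcases h3 a (by simp) with rfl | ha <;> simp at h1 <;> omega
      | k+1 =>
        simp only [CF, Finset.notMem_empty, false_iff]
        rintro ⟨h1, h2, h3⟩
        cases l with
        | nil => simp at h2
        | cons a t =>
          rcases h3 a (by simp) with rfl | ha <;> simp at h1 <;> omega
    | n+1 =>
      intro k l
      have hmem : l ∈ CF (n+1) k ↔
          ((∃ j < n, ∃ t ∈ CF j k, (n+1-j) :: t = l) ∨
            (0 < k ∧ ∃ t ∈ CF n (k-1), 1 :: t = l)) := by
        match k with
        | 0 =>
          simp only [CF, Finset.mem_union, Finset.mem_biUnion, Finset.mem_attach, true_and,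
            Subtype.exists, Finset.mem_range, Finset.mem_image, Finset.notMem_empty, or_false]
          simp
        | k+1 =>
          simp only [CF, Finset.mem_union, Finset.mem_biUnion, Finset.mem_attach, true_and,
            Subtype.exists, Finset.mem_range, Finset.mem_image]
          simp
      rw [hmem]
      constructor
      · rintro (⟨j, hj, t, ht, rfl⟩ | ⟨hk, t, ht, rfl⟩)
        · rw [IH j (by omega) k t] at ht
          obtain ⟨hs, hc, hp⟩ := ht
          refine ⟨by simp [hs]; omega, ?_, ?_⟩
          · rw [List.count_cons]
            simp only [hc]
            have : ¬ ((n + 1 - j : ℕ) = 1) := by omega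
            simp [this]
          · intro x hx
            rcases List.mem_cons.mp hx with rfl | hx
            · right; omega
            · exact hp x hx
        · rw [IH n (by omega) (k-1) t] at ht
          obtain ⟨hs, hc, hp⟩ := ht
          refine ⟨by simp [hs]; omega, by simp [hc]; omega, ?_⟩
          intro x hx
          rcases List.mem_cons.mp hx with rfl | hx
          · left; rfl
          · exact hp x hx
      · rintro ⟨h1, h2, h3⟩
        cases l with
        | nil => simp at h1
        | cons a t =>
          have hsum : a + t.sum = n + 1 := by simpa using h1
          rcases h3 a (by simp) with rfl | ha
          · right
            have hcnt : t.count 1 + 1 = k := by simpa using h2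
            refine ⟨by omega, t, ?_, rfl⟩
            rw [IH n (by omega) (k-1) t]
            exact ⟨by omega, by omega, fun x hx => h3 x (List.mem_cons_of_mem _ hx)⟩
          · left
            refine ⟨n + 1 - a, by omega, t, ?_, by congr 1; omega⟩
            rw [IH (n + 1 - a) (by omega) k t]
            refine ⟨by omega, ?_, fun x hx => h3 x (List.mem_cons_of_mem _ hx)⟩
            rw [List.count_cons] at h2
            have : ¬ (a = 1) := by omega
            simp [this] at h2
            omega

lemma disj_biUnion (n k : ℕ) :
    ∀ x ∈ (Finset.range n).attach, ∀ y ∈ (Finset.range n).attach, x ≠ y →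
      Disjoint ((CF x.1 k).image (fun l => (n + 1 - x.1) :: l))
        ((CF y.1 k).image (fun l => (n + 1 - y.1) :: l)) := by
  intro x hx y hy hxy
  rw [Finset.disjoint_left]
  rintro l hl1 hl2
  simp only [Finset.mem_image] at hl1 hl2
  obtain ⟨t1, _, rfl⟩ := hl1
  obtain ⟨t2, _, heq⟩ := hl2
  have hx' := Finset.mem_range.mp x.2
  have hy' := Finset.mem_range.mp y.2
  have : n + 1 - y.1 = n + 1 - x.1 := by
    exact (List.cons.injEq _ _ _ _ ▸ heq).1
  exact hxy (Subtype.ext (by omega))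

lemma card_CF_sum (n k : ℕ) :
    (CF (n+1) k).card =
      (∑ j ∈ Finset.range n, (CF j k).card) +
        (match k with | 0 => 0 | k+1 => (CF n k).card) := by
  have hbi : ((Finset.range n).attach.biUnion fun j =>
        (CF j.1 k).image (fun l => (n + 1 - j.1) :: l)).card
      = ∑ j ∈ Finset.range n, (CF j k).card := by
    rw [Finset.card_biUnion (disj_biUnion n k)]
    rw [← Finset.sum_attach (Finset.range n) (fun j => (CF j k).card)]
    exact Finset.sum_congr rfl fun j _ =>
      Finset.card_image_of_injective _ (fun a b h => (List.cons.injEq _ _ _ _ ▸ h).2)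
  match k with
  | 0 =>
    rw [show CF (n+1) 0 = ((Finset.range n).attach.biUnion fun j =>
        (CF j.1 0).image (fun l => (n + 1 - j.1) :: l)) ∪ ∅ from by rw [CF]]
    rw [Finset.union_empty, hbi]
    rfl
  | k+1 =>
    rw [show CF (n+1) (k+1) = ((Finset.range n).attach.biUnion fun j =>
        (CF j.1 (k+1)).image (fun l => (n + 1 - j.1) :: l)) ∪
        (CF n k).image (fun l => 1 :: l) from by rw [CF]]
    rw [Finset.card_union_of_disjoint, hbi,
      Finset.card_image_of_injective _ (fun a b h => (List.cons.injEq _ _ _ _ ▸ h).2)]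
    rw [Finset.disjoint_left]
    rintro l hl1 hl2
    simp only [Finset.mem_biUnion, Finset.mem_image, Finset.mem_attach, true_and,
      Subtype.exists, Finset.mem_range] at hl1 hl2
    obtain ⟨j, hj, t1, _, rfl⟩ := hl1
    obtain ⟨t2, _, heq⟩ := hl2
    have : (1 : ℕ) = n + 1 - j := (List.cons.injEq _ _ _ _ ▸ heq).1
    omega


lemma card_CF_coeff : ∀ n, ∀ k, ((CF n k).card : ℤ) = ((Mm n).det).coeff k := by
  intro n
  induction n using Nat.strong_induction_on with
  | _ n IH =>
    match n with
    | 0 =>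
      intro k
      rw [det_Mm_zero, Polynomial.coeff_one]
      match k with
      | 0 => simp [CF]
      | k+1 => simp [CF]
    | n+1 =>
      intro k
      rw [det_Mm_rec, Polynomial.coeff_add, Polynomial.finset_sum_coeff]
      have hsum : (∑ j ∈ Finset.range n, ((Mm j).det).coeff k)
          = ∑ j ∈ Finset.range n, ((CF j k).card : ℤ) := by
        refine Finset.sum_congr rfl fun j hj => ?_
        rw [IH j (by simpa using Nat.lt_succ_of_lt (Finset.mem_range.mp hj))]
      rw [hsum, card_CF_sum]
      match k with
      | 0 =>
        rw [Polynomial.mul_coeff_zero, Polynomial.coeff_X_zero, zero_mul]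
        push_cast
        ring
      | k+1 =>
        rw [Polynomial.coeff_X_mul, ← IH n (Nat.lt_succ_self n) k]
        push_cast
        ring

lemma coeff_Mm_eq_minors (n k : ℕ) (hk : k ≤ n) :
    ((Mm n).det).coeff k =
      ∑ s ∈ Finset.univ.powersetCard (n - k),
        Matrix.det (Matrix.of (fun a b : {x : Fin n // x ∈ s} => F2 n a.1 b.1)) := by
  have : (Mm n).det = ∑ s : Finset (Fin n), X ^ (n - s.card)
      * C (((F2 n).submatrix (Subtype.val : {x // x ∈ s} → Fin n) Subtype.val).det) :=
    det_X_smul_one_add_map (F2 n)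
  rw [this, Polynomial.finset_sum_coeff]
  have hform : ∀ s : Finset (Fin n),
      (X ^ (n - s.card) * C (((F2 n).submatrix (Subtype.val : {x // x ∈ s} → Fin n)
          Subtype.val).det)).coeff k
        = if s.card = n - k then
            (((F2 n).submatrix (Subtype.val : {x // x ∈ s} → Fin n) Subtype.val).det) else 0 := by
    intro s
    rw [mul_comm, Polynomial.C_mul_X_pow_eq_monomial, Polynomial.coeff_monomial]
    have hcard : s.card ≤ n := by
      simpa using Finset.card_le_univ s
    congr 1
    simp only [eq_iff_iff]
    omega
  simp only [hform]
  rw [Finset.powersetCard_eq_filter, Finset.powerset_univ, Finset.sum_filter]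
  rfl

/-- For `k ≤ n - 2`, the number of compositions of `n` with exactly `k` parts
equal to `1` and all other parts `≥ 2` equals the sum of all principal minors
of order `n - k` of `F_{n,2}`. -/
theorem stmt19 (n k : ℕ) (hn : 0 < n) (hk : k ≤ n - 2) :
    (Nat.card {l : List ℕ // l.sum = n ∧ l.count 1 = k ∧
        ∀ x ∈ l, x = 1 ∨ 2 ≤ x} : ℤ) =
      ∑ s ∈ Finset.univ.powersetCard (n - k),
        Matrix.det (Matrix.of (fun a b : {x : Fin n // x ∈ s} => F2 n a.1 b.1)) := by
  have hcard : Nat.card {l : List ℕ // l.sum = n ∧ l.count 1 = k ∧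
      ∀ x ∈ l, x = 1 ∨ 2 ≤ x} = (CF n k).card := by
    rw [Nat.card_congr (Equiv.subtypeEquivRight (fun l => (mem_CF n k l).symm))]
    exact Nat.card_eq_finsetCard _
  rw [hcard, card_CF_coeff n k, coeff_Mm_eq_minors n k (by omega)]
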